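/- In the log-linear model setup, suppose θ* ∈ ℝᵈ is a critical point of the SFT loss, ∇_θ L_sft(θ*) = 0. Then for every θ ∈ ℝᵈ, E_{x∼μ}[KL(π_{θ*}(·|x) ‖ π_θ(·|x))] = L_sft(θ) − L_sft(θ*). Consequently, for any reward r : X × Y → ℝ and any β > 0, defining L_ro(θ) := −E_{x∼μ}[Σ_y π_θ(y|x)·r(x,y)], the KL-regularized objective θ ↦ E_{x∼μ}[KL(π_{θ*}(·|x) ‖ π_θ(·|x))] + (1/β)·L_ro(θ) and the multi-task objective θ ↦ L_sft(θ) + (1/β)·L_ro(θ) differ by the constant −L_sft(θ*), independent of θ, and hence have the same set of minimizers; i.e., KL-regularized reward optimization is equivalent to multi-tasking the SFT task and the reward optimization task. -/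

import Mathlib

open scoped RealInnerProductSpace

/-- If `θ*` is a critical point of the SFT loss, then for every `θ`,
`E_{x∼μ}[KL(π_{θ*}(·|x) ‖ π_θ(·|x))] = L_sft(θ) − L_sft(θ*)`. Consequently, for any reward
`r` and `β > 0`, the KL-regularized objective and the multi-task objective differ by the
constant `−L_sft(θ*)` and hence have the same minimizers. -/
theorem stmt_17 {X Y : Type*} [Fintype X] [Fintype Y] [Nonempty X] [Nonempty Y]
    {d : ℕ} (g : X × Y → EuclideanSpace ℝ (Fin d))
    (D : X × Y → ℝ) (hD0 : ∀ p, 0 ≤ D p) (hD1 : ∑ p, D p = 1)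
    (μ : X → ℝ) (hμ : ∀ x, μ x = ∑ y, D (x, y))
    (A : EuclideanSpace ℝ (Fin d) → X → ℝ)
    (hA : ∀ θ x, A θ x = Real.log (∑ y, Real.exp ⟪θ, g (x, y)⟫))
    (pol : EuclideanSpace ℝ (Fin d) → X → Y → ℝ)
    (hpol : ∀ θ x y, pol θ x y = Real.exp (⟪θ, g (x, y)⟫ - A θ x))
    (L : EuclideanSpace ℝ (Fin d) → ℝ)
    (hL : ∀ θ, L θ = ∑ p, D p * (A θ p.1 - ⟪θ, g p⟫))
    (θs : EuclideanSpace ℝ (Fin d)) (hθs : HasGradientAt L 0 θs)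
    (KLobj : EuclideanSpace ℝ (Fin d) → ℝ)
    (hKLobj : ∀ θ, KLobj θ
      = ∑ x, μ x * ∑ y, pol θs x y * Real.log (pol θs x y / pol θ x y)) :
    (∀ θ, KLobj θ = L θ - L θs)
    ∧ ∀ (r : X × Y → ℝ) (β : ℝ), 0 < β →
        ∀ Lro : EuclideanSpace ℝ (Fin d) → ℝ,
          (∀ θ, Lro θ = -(∑ x, μ x * ∑ y, pol θ x y * r (x, y))) →
          ((∀ θ, KLobj θ + (1 / β) * Lro θ = (L θ + (1 / β) * Lro θ) - L θs)
            ∧ ∀ θ₀, (∀ θ, KLobj θ₀ + (1 / β) * Lro θ₀ ≤ KLobj θ + (1 / β) * Lro θ)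
                ↔ (∀ θ, L θ₀ + (1 / β) * Lro θ₀ ≤ L θ + (1 / β) * Lro θ)) := by
  classical
  have Spos : ∀ (θ : EuclideanSpace ℝ (Fin d)) (x : X),
      0 < ∑ y, Real.exp ⟪θ, g (x, y)⟫ :=
    fun θ x => Finset.sum_pos (fun y _ => Real.exp_pos _) Finset.univ_nonempty
  have polpos : ∀ θ x y, 0 < pol θ x y := fun θ x y => by
    rw [hpol]; exact Real.exp_pos _
  have polval : ∀ θ x y,
      pol θ x y = Real.exp ⟪θ, g (x, y)⟫ / (∑ y', Real.exp ⟪θ, g (x, y')⟫) := by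
    intro θ x y
    rw [hpol, hA, Real.exp_sub, Real.exp_log (Spos θ x)]
  have polsum : ∀ θ x, ∑ y, pol θ x y = 1 := by
    intro θ x
    simp only [polval]
    rw [← Finset.sum_div, div_self (ne_of_gt (Spos θ x))]
  -- key consequence of the critical-point hypothesis
  have key : ∀ u : EuclideanSpace ℝ (Fin d),
      ∑ p, D p * ((∑ y, pol θs p.1 y * ⟪u, g (p.1, y)⟫) - ⟪u, g p⟫) = 0 := by
    intro u
    have hline : HasDerivAt (fun t : ℝ => θs + t • u) u 0 := by
      simpa using ((hasDerivAt_id (0 : ℝ)).smul_const u).const_add θs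
    have h0 : HasDerivAt (fun t : ℝ => L (θs + t • u)) 0 0 := by
      have hf : HasFDerivAt L ((InnerProductSpace.toDual ℝ (EuclideanSpace ℝ (Fin d))) 0)
          (θs + (0 : ℝ) • u) := by simpa using hθs.hasFDerivAt
      have := hf.comp_hasDerivAt 0 hline
      simp at this; exact this
    have hexp : ∀ x : X, HasDerivAt
        (fun t : ℝ => ∑ y, Real.exp (⟪θs, g (x, y)⟫ + t * ⟪u, g (x, y)⟫))
        (∑ y, ⟪u, g (x, y)⟫ * Real.exp ⟪θs, g (x, y)⟫) 0 := by
      intro x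
      have h : ∀ y : Y, HasDerivAt
          (fun t : ℝ => Real.exp (⟪θs, g (x, y)⟫ + t * ⟪u, g (x, y)⟫))
          (⟪u, g (x, y)⟫ * Real.exp ⟪θs, g (x, y)⟫) 0 := by
        intro y
        have hlin : HasDerivAt (fun t : ℝ => ⟪θs, g (x, y)⟫ + t * ⟪u, g (x, y)⟫)
            ⟪u, g (x, y)⟫ 0 := by
          simpa using ((hasDerivAt_id (0 : ℝ)).mul_const ⟪u, g (x, y)⟫).const_add ⟪θs, g (x, y)⟫
        simpa [mul_comm] using hlin.exp
      exact HasDerivAt.fun_sum (fun y _ => h y)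
    have h1 : HasDerivAt (fun t : ℝ => L (θs + t • u))
        (∑ p, D p * ((∑ y, ⟪u, g (p.1, y)⟫ * Real.exp ⟪θs, g (p.1, y)⟫) /
            (∑ y, Real.exp ⟪θs, g (p.1, y)⟫) - ⟪u, g p⟫)) 0 := by
      have hFeq : (fun t : ℝ => L (θs + t • u)) = fun t =>
          ∑ p, D p * (Real.log (∑ y, Real.exp (⟪θs, g (p.1, y)⟫ + t * ⟪u, g (p.1, y)⟫))
            - (⟪θs, g p⟫ + t * ⟪u, g p⟫)) := by
        funext t
        simp only [hL, hA, inner_add_left, real_inner_smul_left]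
      rw [hFeq]
      apply HasDerivAt.fun_sum
      intro p _
      apply HasDerivAt.const_mul
      apply HasDerivAt.sub
      · have hS0 : (∑ y, Real.exp (⟪θs, g (p.1, y)⟫ + (0 : ℝ) * ⟪u, g (p.1, y)⟫)) ≠ 0 :=
          ne_of_gt (Finset.sum_pos (fun y _ => Real.exp_pos _) Finset.univ_nonempty)
        have := (hexp p.1).log (by simpa using hS0)
        simpa using this
      · simpa using ((hasDerivAt_id (0 : ℝ)).mul_const ⟪u, g p⟫).const_add ⟪θs, g p⟫
    have hc := h1.unique h0
    have hconv : ∀ x : X, (∑ y, pol θs x y * ⟪u, g (x, y)⟫)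
        = (∑ y, ⟪u, g (x, y)⟫ * Real.exp ⟪θs, g (x, y)⟫) /
            (∑ y, Real.exp ⟪θs, g (x, y)⟫) := by
      intro x
      rw [Finset.sum_div]
      refine Finset.sum_congr rfl fun y _ => ?_
      rw [polval]; ring
    simp only [hconv]
    exact hc
  have main : ∀ θ, KLobj θ = L θ - L θs := by
    intro θ
    have hlog : ∀ x y, Real.log (pol θs x y / pol θ x y)
        = ⟪θs - θ, g (x, y)⟫ + (A θ x - A θs x) := by
      intro x y
      rw [Real.log_div (ne_of_gt (polpos _ _ _)) (ne_of_gt (polpos _ _ _)), hpol, hpol,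
        Real.log_exp, Real.log_exp, inner_sub_left]
      ring
    have hinner : ∀ x, (∑ y, pol θs x y * Real.log (pol θs x y / pol θ x y))
        = (∑ y, pol θs x y * ⟪θs - θ, g (x, y)⟫) + (A θ x - A θs x) := by
      intro x
      simp only [hlog, mul_add]
      rw [Finset.sum_add_distrib, ← Finset.sum_mul, polsum, one_mul]
    rw [hKLobj]
    simp only [hinner, hμ]
    have e1 : ∑ x, (∑ y, D (x, y)) *
        ((∑ y, pol θs x y * ⟪θs - θ, g (x, y)⟫) + (A θ x - A θs x))
        = ∑ p : X × Y, D p *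
            ((∑ y, pol θs p.1 y * ⟪θs - θ, g (p.1, y)⟫) + (A θ p.1 - A θs p.1)) := by
      rw [Fintype.sum_prod_type]
      refine Finset.sum_congr rfl fun x _ => ?_
      rw [Finset.sum_mul]
    have e2 : L θ - L θs = ∑ p : X × Y, D p * (⟪θs - θ, g p⟫ + (A θ p.1 - A θs p.1)) := by
      rw [hL, hL, ← Finset.sum_sub_distrib]
      refine Finset.sum_congr rfl fun p _ => ?_
      rw [inner_sub_left]; ring
    rw [e1, e2]
    have keyu := key (θs - θ)
    rw [← sub_eq_zero, ← Finset.sum_sub_distrib, ← keyu]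
    refine Finset.sum_congr rfl fun p _ => ?_
    ring
  refine ⟨main, fun r β hβ Lro hLro => ⟨fun θ => by rw [main θ]; ring, fun θ₀ => ?_⟩⟩
  constructor
  · intro h θ
    have h1 := h θ
    rw [main θ, main θ₀] at h1
    linarith
  · intro h θ
    have h1 := h θ
    rw [main θ, main θ₀]
    linarith
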